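/- For every n ≥ 1 and all x, x′ ∈ X, |log Nₙ(x) − log Nₙ(x′)| ≤ ∑_{k=1}ⁿ ρ^{k−1}/(1 − ρ) ≤ 1/(1 − ρ)², where ρ = 1 − σ₋/σ₊. (This is the explicit form of Lemma 2's bound: the conditional log-likelihoods of the observations computed from two different initializations of the hidden chain differ by at most 1/(1 − ρ)², uniformly in n and in the observation functions.) -/

import Mathlib

open MeasureTheory

/-- `Nseq μ q g x n = ∫_{Xⁿ} ∏_{k=1}ⁿ q(x_{k−1}, x_k) g_k(x_k) μ(dx₁)⋯μ(dxₙ)`,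
with `x₀ := x` (for `n = 0` this is `1`, the empty product integrated against a
probability measure). The coordinate `xs k` of `xs : Fin n → X` plays the role
of `x_{k+1}`, and `g (k+1)` plays the role of `g_{k+1}`. -/
noncomputable def Nseq {X : Type*} [MeasurableSpace X] (μ : Measure X)
    (q : X → X → ℝ) (g : ℕ → X → ℝ) (x : X) (n : ℕ) : ℝ :=
  ∫ xs : Fin n → X,
    ∏ k : Fin n,
      q (if (k : ℕ) = 0 then x
         else xs ⟨(k : ℕ) - 1, Nat.lt_of_le_of_lt (Nat.sub_le _ _) k.isLt⟩) (xs k) *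
        g ((k : ℕ) + 1) (xs k)
    ∂(Measure.pi fun _ => μ)

section Aux

variable {X : Type*} [MeasurableSpace X] (μ : Measure X) [IsProbabilityMeasure μ]
  (σm σp : ℝ) (q : X → X → ℝ) (g : ℕ → X → ℝ) (n : ℕ)

/-- The integrand of `Nseq`. -/
noncomputable def Fint (x : X) (xs : Fin n → X) : ℝ :=
  ∏ k : Fin n,
    q (if (k : ℕ) = 0 then x
       else xs ⟨(k : ℕ) - 1, Nat.lt_of_le_of_lt (Nat.sub_le _ _) k.isLt⟩) (xs k) *
      g ((k : ℕ) + 1) (xs k)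

theorem Nseq_eq (x : X) :
    Nseq μ q g x n = ∫ xs : Fin n → X, Fint q g n x xs ∂(Measure.pi fun _ => μ) := rfl

variable (hσm : 0 < σm) (hσ : σm ≤ σp)
  (hq : Measurable (Function.uncurry q))
  (hql : ∀ x x', σm ≤ q x x') (hqu : ∀ x x', q x x' ≤ σp)
  (hgm : ∀ k, 1 ≤ k → Measurable (g k))
  (hg0 : ∀ k, 1 ≤ k → ∀ x, 0 ≤ g k x)
  (hgi : ∀ k, 1 ≤ k → Integrable (g k) μ)
  (hgpos : ∀ k, 1 ≤ k → 0 < ∫ x, g k x ∂μ)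

include hσm hσ hql hqu hg0 in
theorem Fint_nonneg (x : X) (xs : Fin n → X) : 0 ≤ Fint q g n x xs := by
  refine Finset.prod_nonneg fun k _ => mul_nonneg ?_ (hg0 _ (by omega) _)
  exact le_trans hσm.le (hql _ _)

include hq hgm in
theorem Fint_meas (x : X) : Measurable (Fint q g n x) := by
  refine Finset.measurable_prod _ fun k _ => Measurable.mul ?_ ?_
  · have hprev : Measurable (fun xs : Fin n → X =>
        if (k : ℕ) = 0 then x
        else xs ⟨(k : ℕ) - 1, Nat.lt_of_le_of_lt (Nat.sub_le _ _) k.isLt⟩) := by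
      by_cases h : (k : ℕ) = 0
      · simp only [if_pos h]; exact measurable_const
      · simp only [if_neg h]; exact measurable_pi_apply _
    exact hq.comp (hprev.prodMk (measurable_pi_apply k))
  · exact (hgm _ (by omega)).comp (measurable_pi_apply k)

include hσm hσ hql hqu hg0 hgm hgi hq in
theorem Fint_integrable (x : X) :
    Integrable (Fint q g n x) (Measure.pi fun _ => μ) := by
  letI : MeasureSpace X := ⟨μ⟩
  have hbd : Integrable (fun xs : Fin n → X => ∏ k : Fin n, σp * g ((k : ℕ) + 1) (xs k))
      (Measure.pi fun _ => μ) := by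
    have := MeasureTheory.Integrable.fin_nat_prod (𝕜 := ℝ)
      (f := fun k : Fin n => fun y : X => σp * g ((k : ℕ) + 1) y)
      (fun k => ((hgi _ (by omega)).const_mul σp))
    simpa [volume_pi] using this
  refine hbd.mono' ((Fint_meas q g n hq hgm x).aestronglyMeasurable) ?_
  refine Filter.Eventually.of_forall fun xs => ?_
  rw [Real.norm_eq_abs, abs_of_nonneg (Fint_nonneg σm σp q g n hσm hσ hql hqu hg0 x xs)]
  refine Finset.prod_le_prod (fun k _ => mul_nonneg (hσm.le.trans (hql _ _)) (hg0 _ (by omega) _))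
    (fun k _ => mul_le_mul_of_nonneg_right (hqu _ _) (hg0 _ (by omega) _))

include hσm hσ hql hqu hg0 hgm hgi hgpos hq in
theorem Nseq_pos (x : X) : 0 < Nseq μ q g x n := by
  letI : MeasureSpace X := ⟨μ⟩
  have hlow : ∀ xs : Fin n → X,
      (∏ k : Fin n, σm * g ((k : ℕ) + 1) (xs k)) ≤ Fint q g n x xs := by
    intro xs
    refine Finset.prod_le_prod (fun k _ => mul_nonneg hσm.le (hg0 _ (by omega) _))
      (fun k _ => mul_le_mul_of_nonneg_right (hql _ _) (hg0 _ (by omega) _))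
  have hint : Integrable (fun xs : Fin n → X => ∏ k : Fin n, σm * g ((k : ℕ) + 1) (xs k))
      (Measure.pi fun _ => μ) := by
    have := MeasureTheory.Integrable.fin_nat_prod (𝕜 := ℝ)
      (f := fun k : Fin n => fun y : X => σm * g ((k : ℕ) + 1) y)
      (fun k => ((hgi _ (by omega)).const_mul σm))
    simpa [volume_pi] using this
  have hval : (∫ xs : Fin n → X, ∏ k : Fin n, σm * g ((k : ℕ) + 1) (xs k)
      ∂(Measure.pi fun _ => μ)) = ∏ k : Fin n, (σm * ∫ y, g ((k : ℕ) + 1) y ∂μ) := by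
    have := MeasureTheory.integral_fin_nat_prod_eq_prod (𝕜 := ℝ) (μ := fun _ => μ)
      (f := fun k : Fin n => fun y : X => σm * g ((k : ℕ) + 1) y)
    refine Eq.trans this ?_
    exact Finset.prod_congr rfl fun k _ => Eq.trans (integral_const_mul σm _) rfl
  have hpos : 0 < ∏ k : Fin n, (σm * ∫ y, g ((k : ℕ) + 1) y ∂μ) :=
    Finset.prod_pos fun k _ => mul_pos hσm (hgpos _ (by omega))
  calc 0 < ∏ k : Fin n, (σm * ∫ y, g ((k : ℕ) + 1) y ∂μ) := hpos
    _ = _ := hval.symm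
    _ ≤ Nseq μ q g x n := by
      rw [Nseq_eq]
      exact integral_mono hint
        (Fint_integrable μ σm σp q g n hσm hσ hq hql hqu hgm hg0 hgi x)
        hlow

include hσm hσ hql hqu hg0 hgm hgi hq in
theorem Nseq_ratio (hn : 1 ≤ n) (x x' : X) :
    Nseq μ q g x n ≤ (σp / σm) * Nseq μ q g x' n := by
  have hrpos : (0 : ℝ) < σp / σm := div_pos (hσm.trans_le hσ) hσm
  have hpt : ∀ xs : Fin n → X, Fint q g n x xs ≤ (σp / σm) * Fint q g n x' xs := by
    intro xs
    have key : Fint q g n x xs ≤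
        ∏ k : Fin n, ((if (k : ℕ) = 0 then σp / σm else 1) *
          (q (if (k : ℕ) = 0 then x'
              else xs ⟨(k : ℕ) - 1, Nat.lt_of_le_of_lt (Nat.sub_le _ _) k.isLt⟩) (xs k) *
            g ((k : ℕ) + 1) (xs k))) := by
      refine Finset.prod_le_prod
        (fun k _ => mul_nonneg (hσm.le.trans (hql _ _)) (hg0 _ (by omega) _)) ?_
      intro k _
      by_cases h : (k : ℕ) = 0
      · simp only [h, if_pos]
        rw [← mul_assoc]
        refine mul_le_mul_of_nonneg_right ?_ (hg0 _ (by omega) _)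
        calc q x (xs k) ≤ σp := hqu _ _
          _ = (σp / σm) * σm := by field_simp
          _ ≤ (σp / σm) * q x' (xs k) :=
            mul_le_mul_of_nonneg_left (hql _ _) hrpos.le
      · simp only [h, if_neg, if_false, one_mul, le_refl]
    rw [Finset.prod_mul_distrib] at key
    have hc : (∏ k : Fin n, (if (k : ℕ) = 0 then σp / σm else 1)) = σp / σm := by
      rw [Finset.prod_eq_single (⟨0, hn⟩ : Fin n)]
      · simp
      · intro b _ hb
        have : (b : ℕ) ≠ 0 := fun h => hb (Fin.ext h)
        simp [this]
      · simp
    rw [hc] at key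
    exact key
  rw [Nseq_eq, Nseq_eq, ← integral_const_mul]
  exact integral_mono (Fint_integrable μ σm σp q g n hσm hσ hq hql hqu hgm hg0 hgi x)
    ((Fint_integrable μ σm σp q g n hσm hσ hq hql hqu hgm hg0 hgi x').const_mul _) hpt

end Aux

/-- explicit form of Lemma 2's bound. For every `n ≥ 1` and
all initial points `x, x′`, the conditional log-likelihoods differ by at most
`∑_{k=1}ⁿ ρ^{k−1}/(1 − ρ) ≤ 1/(1 − ρ)²`, where `ρ = 1 − σ₋/σ₊`. -/
theorem log_likelihood_forgetting
    {X : Type*} [MeasurableSpace X] (μ : Measure X) [IsProbabilityMeasure μ]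
    (σm σp : ℝ) (hσm : 0 < σm) (hσ : σm ≤ σp)
    (q : X → X → ℝ) (hq : Measurable (Function.uncurry q))
    (hql : ∀ x x', σm ≤ q x x') (hqu : ∀ x x', q x x' ≤ σp)
    (g : ℕ → X → ℝ) (hgm : ∀ k, 1 ≤ k → Measurable (g k))
    (hg0 : ∀ k, 1 ≤ k → ∀ x, 0 ≤ g k x)
    (hgi : ∀ k, 1 ≤ k → Integrable (g k) μ)
    (hgpos : ∀ k, 1 ≤ k → 0 < ∫ x, g k x ∂μ)
    (n : ℕ) (hn : 1 ≤ n) (x x' : X) :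
    |Real.log (Nseq μ q g x n) - Real.log (Nseq μ q g x' n)| ≤
        ∑ k ∈ Finset.range n, (1 - σm / σp) ^ k / (1 - (1 - σm / σp)) ∧
    ∑ k ∈ Finset.range n, (1 - σm / σp) ^ k / (1 - (1 - σm / σp)) ≤
        1 / (1 - (1 - σm / σp)) ^ 2 := by
  have hσp : (0 : ℝ) < σp := hσm.trans_le hσ
  set ρ : ℝ := 1 - σm / σp with hρdef
  have hρeq : 1 - ρ = σm / σp := by simp [hρdef]
  have hρpos : (0 : ℝ) < 1 - ρ := by rw [hρeq]; positivity
  have hρ0 : 0 ≤ ρ := by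
    have : σm / σp ≤ 1 := (div_le_one hσp).mpr hσ
    simp [hρdef]; linarith
  have hrpos : (0 : ℝ) < σp / σm := div_pos hσp hσm
  have hpx := Nseq_pos μ σm σp q g n hσm hσ hq hql hqu hgm hg0 hgi hgpos x
  have hpx' := Nseq_pos μ σm σp q g n hσm hσ hq hql hqu hgm hg0 hgi hgpos x'
  -- |log Nx - log Nx'| ≤ log (σp/σm)
  have habs : |Real.log (Nseq μ q g x n) - Real.log (Nseq μ q g x' n)| ≤
      Real.log (σp / σm) := by
    rw [abs_sub_le_iff]
    constructor
    · have h1 := Nseq_ratio μ σm σp q g n hσm hσ hq hql hqu hgm hg0 hgi hn x x'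
      have := Real.log_le_log hpx h1
      rw [Real.log_mul hrpos.ne' hpx'.ne'] at this
      linarith
    · have h1 := Nseq_ratio μ σm σp q g n hσm hσ hq hql hqu hgm hg0 hgi hn x' x
      have := Real.log_le_log hpx' h1
      rw [Real.log_mul hrpos.ne' hpx.ne'] at this
      linarith
  have hterm0 : ρ ^ 0 / (1 - ρ) = σp / σm := by
    rw [pow_zero, hρeq, one_div_div]
  have hsum_ge : σp / σm ≤ ∑ k ∈ Finset.range n, ρ ^ k / (1 - ρ) := by
    rw [← hterm0]
    exact Finset.single_le_sum (f := fun k => ρ ^ k / (1 - ρ))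
      (fun k _ => div_nonneg (pow_nonneg hρ0 k) hρpos.le)
      (Finset.mem_range.mpr hn)
  have hlog : Real.log (σp / σm) ≤ σp / σm :=
    (Real.log_le_sub_one_of_pos hrpos).trans (by linarith)
  refine ⟨habs.trans (hlog.trans hsum_ge), ?_⟩
  -- geometric sum bound
  have hρ1 : ρ < 1 := by linarith
  have hgs : ∑ k ∈ Finset.range n, ρ ^ k ≤ 1 / (1 - ρ) := by
    have heq : (ρ ^ n - 1) / (ρ - 1) = (1 - ρ ^ n) / (1 - ρ) := by
      rw [← neg_div_neg_eq, neg_sub, neg_sub]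
    rw [geom_sum_eq (by intro h; rw [h] at hρ1; linarith : ρ ≠ 1) n, heq,
      div_le_div_iff₀ hρpos hρpos]
    nlinarith [pow_nonneg hρ0 n]
  calc ∑ k ∈ Finset.range n, ρ ^ k / (1 - ρ)
      = (∑ k ∈ Finset.range n, ρ ^ k) / (1 - ρ) := by rw [Finset.sum_div]
    _ ≤ (1 / (1 - ρ)) / (1 - ρ) := by gcongr
    _ = 1 / (1 - ρ) ^ 2 := by field_simp
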